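/- For every ε > 0, q^{⊗M}({z ∈ X^M : ∃ x ∈ S, inf_{h ∈ span{Φ(z_1),…,Φ(z_M)}} ‖Φ(x) − h‖ ≥ ε}) → 0 as M → ∞. (Combined with the convexity of the distance to a subspace, this yields that the RKHS projection error ‖μ̄ − μ̂‖ of any empirical kernel mean embedding μ̂ = (1/N) ∑_n Φ(x_n) of points x_n ∈ S onto the synthetic-data subspace converges to 0 in probability.) -/

import Mathlib

open MeasureTheory Filter

/-- On a compact metric space with a continuous feature map `Φ`, if `S` is a
closed set contained in the support of `q`, then for every `ε > 0` the
probability that some point of `S` has its feature map at RKHS distance at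
least `ε` from the span of the feature maps of `M` i.i.d. samples from `q`
tends to `0` as `M → ∞`. -/
theorem stmt_10 {X H : Type*} [MetricSpace X] [CompactSpace X]
    [MeasurableSpace X] [BorelSpace X]
    [NormedAddCommGroup H] [InnerProductSpace ℝ H] [CompleteSpace H]
    (Φ : X → H) (hΦ : Continuous Φ)
    (q : Measure X) [IsProbabilityMeasure q]
    (S : Set X) (hS_closed : IsClosed S)
    (hS_supp : ∀ x ∈ S, ∀ r : ℝ, 0 < r → 0 < q (Metric.ball x r))
    (ε : ℝ) (hε : 0 < ε) :
    Tendsto (fun M : ℕ =>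
        Measure.pi (fun _ : Fin M => q)
          {z : Fin M → X | ∃ x ∈ S,
            ε ≤ Metric.infDist (Φ x)
              (Submodule.span ℝ (Set.range fun m => Φ (z m)) : Set H)})
      atTop (nhds 0) := by
  -- open neighborhoods
  set A : X → Set X := fun x => Φ ⁻¹' Metric.ball (Φ x) (ε/2) with hA
  have hAopen : ∀ x, IsOpen (A x) := fun x =>
    (Metric.isOpen_ball).preimage hΦ
  have hAmem : ∀ x, x ∈ A x := fun x => by
    simp [hA, Metric.mem_ball, half_pos hε]
  -- finite subcover of S
  have hScomp : IsCompact S := hS_closed.isCompact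
  obtain ⟨t, ht⟩ := hScomp.elim_finite_subcover (fun x : S => A x)
    (fun x => hAopen x) (fun x hx => Set.mem_iUnion.2 ⟨⟨x, hx⟩, hAmem x⟩)
  -- each A i has positive measure
  have hpos : ∀ i : S, 0 < q (A i) := by
    intro i
    obtain ⟨r, hr, hball⟩ := Metric.isOpen_iff.1 (hAopen i) i (hAmem i)
    exact (hS_supp i i.2 r hr).trans_le (measure_mono hball)
  have hlt : ∀ i : S, q ((A i)ᶜ) < 1 := by
    intro i
    rw [measure_compl ((hAopen i).measurableSet) (measure_ne_top q _),
      measure_univ]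
    exact ENNReal.sub_lt_self ENNReal.one_ne_top one_ne_zero (hpos i).ne'
  -- the key inclusion
  have hincl : ∀ M : ℕ,
      {z : Fin M → X | ∃ x ∈ S,
        ε ≤ Metric.infDist (Φ x)
          (Submodule.span ℝ (Set.range fun m => Φ (z m)) : Set H)} ⊆
      ⋃ i ∈ t, Set.pi Set.univ (fun _ : Fin M => (A i)ᶜ) := by
    intro M z hz
    obtain ⟨x, hxS, hx⟩ := hz
    obtain ⟨i, hit, hxi⟩ := Set.mem_iUnion₂.1 (ht hxS)
    refine Set.mem_iUnion₂.2 ⟨i, hit, fun m _ => ?_⟩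
    intro hm
    have hmem : Φ (z m) ∈ (Submodule.span ℝ (Set.range fun m => Φ (z m)) : Set H) :=
      Submodule.subset_span ⟨m, rfl⟩
    have h1 : Metric.infDist (Φ x)
        (Submodule.span ℝ (Set.range fun m => Φ (z m)) : Set H)
        ≤ dist (Φ x) (Φ (z m)) := Metric.infDist_le_dist_of_mem hmem
    have h2 : dist (Φ x) (Φ (z m)) < ε := by
      calc dist (Φ x) (Φ (z m)) ≤ dist (Φ x) (Φ (i : X)) + dist (Φ (i : X)) (Φ (z m)) :=
            dist_triangle _ _ _
        _ < ε/2 + ε/2 := by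
            have hxi' : dist (Φ x) (Φ (i : X)) < ε/2 := hxi
            have hm' : dist (Φ (z m)) (Φ (i : X)) < ε/2 := hm
            rw [dist_comm (Φ (i : X))]
            exact add_lt_add hxi' hm'
        _ = ε := add_halves ε
    exact absurd hx (not_le.2 (h1.trans_lt h2))
  -- bound the measure
  have hbound : ∀ M : ℕ,
      Measure.pi (fun _ : Fin M => q)
        {z : Fin M → X | ∃ x ∈ S,
          ε ≤ Metric.infDist (Φ x)
            (Submodule.span ℝ (Set.range fun m => Φ (z m)) : Set H)}
      ≤ ∑ i ∈ t, (q ((A i)ᶜ)) ^ M := by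
    intro M
    refine (measure_mono (hincl M)).trans ?_
    refine (measure_biUnion_finset_le t _).trans ?_
    refine Finset.sum_le_sum fun i _ => ?_
    rw [Measure.pi_pi]
    simp [Finset.prod_const]
  -- squeeze
  have hsum : Tendsto (fun M : ℕ => ∑ i ∈ t, (q ((A i)ᶜ)) ^ M)
      atTop (nhds 0) := by
    have := tendsto_finset_sum t (fun i _ =>
      ENNReal.tendsto_pow_atTop_nhds_zero_of_lt_one (hlt i))
    simpa using this
  exact tendsto_of_tendsto_of_tendsto_of_le_of_le tendsto_const_nhds hsum
    (fun M => zero_le) hbound
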